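/- Let P and Q be probability measures on the same measurable space (Ω, F), and let A ∈ F. Then P(A) + Q(Aᶜ) ≥ (1/2) exp(-D(P,Q)), where D(P,Q) denotes the Kullback-Leibler divergence of P with respect to Q. -/
import Mathlib


open MeasureTheory Set

open scoped ENNReal

/-- Auxiliary form of the Bretagnolle–Huber inequality with the divergence written out. -/
theorem bretagnolle_huber_aux {Ω : Type*} [MeasurableSpace Ω] (P Q : Measure Ω)
    [IsProbabilityMeasure P] [IsProbabilityMeasure Q] (hPQ : P ≪ Q)
    (hint : Integrable (fun ω => Real.log (P.rnDeriv Q ω).toReal) P)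
    (A : Set Ω) (hA : MeasurableSet A) :
    (1 / 2) * Real.exp (-(∫ ω, Real.log (P.rnDeriv Q ω).toReal ∂P)) ≤ (P A).toReal + (Q Aᶜ).toReal := by
  set p : Ω → ℝ≥0∞ := P.rnDeriv Q with hp
  have hmeas : Measurable p := Measure.measurable_rnDeriv P Q
  have h1 : ∫⁻ ω, p ω ∂Q = 1 := by rw [hp, Measure.lintegral_rnDeriv hPQ]; simp
  have hfin : ∀ᵐ ω ∂Q, p ω ≠ ∞ := Measure.rnDeriv_ne_top P Q
  have hfinP : ∀ᵐ ω ∂P, p ω ≠ ∞ := hPQ.ae_le hfin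
  have hposP : ∀ᵐ ω ∂P, 0 < p ω := Measure.rnDeriv_pos hPQ
  set m : Ω → ℝ≥0∞ := fun ω => min (p ω) 1 with hm
  set M : Ω → ℝ≥0∞ := fun ω => max (p ω) 1 with hM
  -- Step A : ∫⁻ m ≤ P A + Q Aᶜ
  have stepA : ∫⁻ ω, m ω ∂Q ≤ P A + Q Aᶜ := by
    rw [← lintegral_add_compl _ hA]
    gcongr
    · calc ∫⁻ ω in A, m ω ∂Q ≤ ∫⁻ ω in A, p ω ∂Q := by gcongr with ω; exact min_le_left _ _
        _ = P A := Measure.setLIntegral_rnDeriv hPQ A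
    · calc ∫⁻ ω in Aᶜ, m ω ∂Q ≤ ∫⁻ ω in Aᶜ, 1 ∂Q := by gcongr with ω; exact min_le_right _ _
        _ = Q Aᶜ := by simp
  have hMle : ∫⁻ ω, M ω ∂Q ≤ 2 := by
    calc ∫⁻ ω, M ω ∂Q ≤ ∫⁻ ω, (p ω + 1) ∂Q := by
          gcongr with ω; exact max_le (le_add_right le_rfl) (le_add_left le_rfl)
      _ = 2 := by rw [lintegral_add_left hmeas, h1]; simp; norm_num
  -- Hellinger affinity H
  set H : ℝ≥0∞ := ∫⁻ ω, (p ω) ^ (2⁻¹ : ℝ) ∂Q with hH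
  have hHle : H ≤ 2 := by
    refine le_trans ?_ hMle
    rw [hH]
    gcongr with ω
    rcases le_total (p ω) 1 with h | h
    · calc (p ω) ^ (2⁻¹:ℝ) ≤ (1:ℝ≥0∞) ^ (2⁻¹:ℝ) := ENNReal.rpow_le_rpow h (by norm_num)
        _ = 1 := ENNReal.one_rpow _
        _ ≤ M ω := le_max_right _ _
    · calc (p ω) ^ (2⁻¹:ℝ) ≤ (p ω) ^ (1:ℝ) :=
            ENNReal.rpow_le_rpow_of_exponent_le h (by norm_num)
        _ = p ω := ENNReal.rpow_one _
        _ ≤ M ω := le_max_left _ _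
  have hHne : H ≠ ∞ := (lt_of_le_of_lt hHle (by norm_num)).ne
  -- step B : H^2 ≤ 2 * ∫ m
  have stepB : H ^ (2:ℕ) ≤ 2 * ∫⁻ ω, m ω ∂Q := by
    have hsplit : ∀ ω, (p ω) ^ (2⁻¹ : ℝ) = (m ω) ^ (2⁻¹ : ℝ) * (M ω) ^ (2⁻¹ : ℝ) := by
      intro ω
      rw [← ENNReal.mul_rpow_of_nonneg _ _ (by norm_num)]
      congr 1
      rcases le_total (p ω) 1 with h | h
      · simp [hm, hM, min_eq_left h, max_eq_right h]
      · simp [hm, hM, min_eq_right h, max_eq_left h]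
    have hHolder := ENNReal.lintegral_mul_norm_pow_le (μ := Q) (f := m) (g := M)
      ((hmeas.min measurable_const).aemeasurable) ((hmeas.max measurable_const).aemeasurable)
      (by norm_num : (0:ℝ) ≤ 2⁻¹) (by norm_num : (0:ℝ) ≤ 2⁻¹) (by norm_num)
    have hH_le : H ≤ (∫⁻ ω, m ω ∂Q) ^ (2⁻¹:ℝ) * (∫⁻ ω, M ω ∂Q) ^ (2⁻¹:ℝ) := by
      rw [hH]; simp_rw [hsplit]; exact hHolder
    calc H ^ (2:ℕ) ≤ ((∫⁻ ω, m ω ∂Q) ^ (2⁻¹:ℝ) * (∫⁻ ω, M ω ∂Q) ^ (2⁻¹:ℝ)) ^ (2:ℕ) := by gcongr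
      _ = (∫⁻ ω, m ω ∂Q) * (∫⁻ ω, M ω ∂Q) := by
          rw [mul_pow, ← ENNReal.rpow_natCast ((∫⁻ ω, m ω ∂Q) ^ (2⁻¹:ℝ)),
            ← ENNReal.rpow_natCast ((∫⁻ ω, M ω ∂Q) ^ (2⁻¹:ℝ)),
            ← ENNReal.rpow_mul, ← ENNReal.rpow_mul]
          norm_num
      _ ≤ (∫⁻ ω, m ω ∂Q) * 2 := by gcongr
      _ = 2 * ∫⁻ ω, m ω ∂Q := mul_comm _ _
  -- change of measure: ∫⁻ p^(-1/2) dP = H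
  have hrpow_meas : Measurable fun ω => (p ω) ^ (-(2⁻¹):ℝ) := hmeas.pow_const _
  have hchg : ∫⁻ ω, (p ω) ^ (-(2⁻¹):ℝ) ∂P = H := by
    rw [← lintegral_rnDeriv_mul hPQ hrpow_meas.aemeasurable, hH]
    refine lintegral_congr_ae ?_
    filter_upwards [hfin] with ω htop
    rcases eq_or_ne (p ω) 0 with h0 | h0
    · rw [show P.rnDeriv Q ω = (0:ℝ≥0∞) from h0, h0]; simp
    · calc P.rnDeriv Q ω * (p ω) ^ (-(2⁻¹):ℝ) = (p ω) ^ (1:ℝ) * (p ω) ^ (-(2⁻¹):ℝ) := by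
            rw [ENNReal.rpow_one]
        _ = (p ω) ^ ((1:ℝ) + -(2⁻¹)) := (ENNReal.rpow_add _ _ h0 htop).symm
        _ = (p ω) ^ (2⁻¹:ℝ) := by norm_num
  -- Jensen
  set f : Ω → ℝ := fun ω => (-(2⁻¹ : ℝ)) * Real.log ((p ω).toReal) with hf
  have hf_int : Integrable f P := hint.const_mul _
  have hexp_eq : ∀ᵐ ω ∂P, ENNReal.ofReal (Real.exp (f ω)) = (p ω) ^ (-(2⁻¹) : ℝ) := by
    filter_upwards [hposP, hfinP] with ω h0 htop
    have h0' : 0 < (p ω).toReal := ENNReal.toReal_pos h0.ne' htop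
    rw [hf]
    dsimp only
    rw [← Real.log_rpow h0', Real.exp_log (Real.rpow_pos_of_pos h0' _),
      ENNReal.toReal_rpow, ENNReal.ofReal_toReal]
    simp [ENNReal.rpow_eq_top_iff, h0.ne', htop]
  have hmeas_exp : Measurable fun ω => Real.exp (f ω) := by
    exact (Real.measurable_exp.comp ((hmeas.ennreal_toReal).log.const_mul _))
  have hgi : Integrable (fun ω => Real.exp (f ω)) P := by
    refine ⟨hmeas_exp.aestronglyMeasurable, ?_⟩
    rw [hasFiniteIntegral_iff_ofReal (ae_of_all _ fun ω => (Real.exp_pos _).le)]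
    rw [lintegral_congr_ae hexp_eq, hchg]
    exact lt_of_le_of_lt hHle (by norm_num)
  have hJensen : Real.exp (∫ ω, f ω ∂P) ≤ ∫ ω, Real.exp (f ω) ∂P := by
    have := convexOn_exp.map_integral_le (μ := P) Real.continuous_exp.continuousOn
      isClosed_univ (Filter.Eventually.of_forall fun _ => mem_univ _) hf_int ?_
    · exact this
    · exact hgi
  have hIeq : ∫ ω, Real.exp (f ω) ∂P = H.toReal := by
    rw [integral_eq_lintegral_of_nonneg_ae (ae_of_all _ fun ω => (Real.exp_pos _).le)
      hgi.aestronglyMeasurable]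
    congr 1
    rw [lintegral_congr_ae hexp_eq, hchg]
  set KL : ℝ := ∫ ω, Real.log ((p ω).toReal) ∂P with hKL
  have hintf : ∫ ω, f ω ∂P = (-(2⁻¹:ℝ)) * KL := by
    rw [hf, hKL]; exact integral_const_mul _ _
  set c : ℝ := Real.exp ((-(2⁻¹:ℝ)) * KL) with hc
  have hcH : ENNReal.ofReal c ≤ H := by
    rw [← ENNReal.ofReal_toReal hHne]
    apply ENNReal.ofReal_le_ofReal
    rw [hc, ← hintf, ← hIeq]; exact hJensen
  -- key ENNReal inequality
  have key : ENNReal.ofReal (Real.exp (-KL)) ≤ 2 * (P A + Q Aᶜ) := by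
    have hcc : Real.exp (-KL) = c ^ (2:ℕ) := by
      rw [hc, pow_two, ← Real.exp_add]; ring_nf
    calc ENNReal.ofReal (Real.exp (-KL)) = (ENNReal.ofReal c) ^ (2:ℕ) := by
          rw [hcc, ENNReal.ofReal_pow (Real.exp_pos _).le]
      _ ≤ H ^ (2:ℕ) := by gcongr
      _ ≤ 2 * ∫⁻ ω, m ω ∂Q := stepB
      _ ≤ 2 * (P A + Q Aᶜ) := by gcongr
  -- conclude
  have hSne : P A + Q Aᶜ ≠ ∞ := by finiteness
  have hreal : Real.exp (-KL) ≤ (2 * (P A + Q Aᶜ)).toReal := by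
    rw [← ENNReal.ofReal_le_iff_le_toReal (by finiteness)]
    exact key
  have htR : (2 * (P A + Q Aᶜ)).toReal = 2 * ((P A).toReal + (Q Aᶜ).toReal) := by
    rw [ENNReal.toReal_mul, ENNReal.toReal_add (by finiteness) (by finiteness)]
    norm_num
  rw [htR] at hreal
  linarith

/-- The Kullback–Leibler divergence `∫ log (dP/dQ) dP` (as a real number;
meaningful when `P ≪ Q` and the integrand is `P`-integrable). -/
noncomputable def klDivReal {Ω : Type*} [MeasurableSpace Ω] (P Q : Measure Ω) : ℝ :=
  ∫ ω, Real.log (P.rnDeriv Q ω).toReal ∂P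

/-- Bretagnolle–Huber inequality: for probability measures `P, Q` on the same measurable
space and any measurable event `A`, `P(A) + Q(Aᶜ) ≥ (1/2) exp(-D(P,Q))`.  (When `P` is not
absolutely continuous w.r.t. `Q`, or the divergence is infinite, the inequality is trivial;
we state the nontrivial finite case.) -/
theorem stmt2 {Ω : Type*} [MeasurableSpace Ω] (P Q : Measure Ω)
    [IsProbabilityMeasure P] [IsProbabilityMeasure Q]
    (hPQ : P ≪ Q)
    (hint : Integrable (fun ω => Real.log (P.rnDeriv Q ω).toReal) P)
    (A : Set Ω) (hA : MeasurableSet A) :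
    (1 / 2) * Real.exp (-(klDivReal P Q)) ≤ (P A).toReal + (Q Aᶜ).toReal :=
  bretagnolle_huber_aux P Q hPQ hint A hA
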